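/- For every real M > 0 there exists a constant c > 0 such that for every real λ ≥ 1 and every r ∈ (0, M] one has λ · ∫_{−1/λ}^{1/λ} |log |r − t|| dt ≤ c + c · min( log λ, |log r| ). -/

import Mathlib

open MeasureTheory

/-- Pointwise domination of `|log s|` on `[0, b]`. -/
lemma aux_dom_bound {b : ℝ} (hb : 0 < b) {s : ℝ} (hs : s ∈ Set.Icc (0:ℝ) b) :
    |Real.log s| ≤ |Real.log b| + 2 * Real.sqrt b * s ^ (-(1/2) : ℝ) := by
  obtain ⟨hs0, hsb⟩ := hs
  rcases eq_or_lt_of_le hs0 with h | h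
  · rw [← h, Real.log_zero, abs_zero, Real.zero_rpow (by norm_num)]
    positivity
  · have hrpow : s ^ (-(1/2) : ℝ) = (Real.sqrt s)⁻¹ := by
      rw [Real.rpow_neg h.le, Real.sqrt_eq_rpow]
    have hsq : Real.sqrt (b / s) = Real.sqrt b / Real.sqrt s := Real.sqrt_div hb.le s
    have hlog2 : Real.log (b / s) ≤ 2 * (Real.sqrt b * (Real.sqrt s)⁻¹) := by
      have h1 : Real.log (Real.sqrt (b / s)) = Real.log (b / s) / 2 :=
        Real.log_sqrt (by positivity)
      have h2 : Real.log (Real.sqrt (b / s)) ≤ Real.sqrt (b / s) - 1 :=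
        Real.log_le_sub_one_of_pos (Real.sqrt_pos.mpr (by positivity))
      have h3 : Real.sqrt (b / s) = Real.sqrt b * (Real.sqrt s)⁻¹ := by
        rw [hsq, div_eq_mul_inv]
      linarith
    have hds : 0 ≤ Real.log (b / s) := Real.log_nonneg ((one_le_div h).mpr hsb)
    have hkey : |Real.log s| ≤ |Real.log b| + Real.log (b / s) := by
      have hsplit : Real.log s = Real.log b - Real.log (b / s) := by
        rw [Real.log_div hb.ne' h.ne']; ring
      rw [hsplit]
      calc |Real.log b - Real.log (b / s)| ≤ |Real.log b| + |Real.log (b / s)| :=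
            abs_sub _ _
        _ = |Real.log b| + Real.log (b / s) := by rw [abs_of_nonneg hds]
    rw [hrpow]
    nlinarith

/-- Interval integrability of `|log|` on `[0, b]`. -/
lemma aux_intble {b : ℝ} (hb : 0 < b) :
    IntervalIntegrable (fun s => |Real.log s|) volume 0 b := by
  have hg : IntervalIntegrable
      (fun s : ℝ => |Real.log b| + 2 * Real.sqrt b * s ^ (-(1/2) : ℝ)) volume 0 b :=
    (intervalIntegrable_const).add
      ((intervalIntegral.intervalIntegrable_rpow' (by norm_num)).const_mul _)
  refine hg.mono_fun' (Real.measurable_log.abs.aestronglyMeasurable) ?_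
  rw [Set.uIoc_of_le hb.le]
  filter_upwards [ae_restrict_mem measurableSet_Ioc] with s hsm
  have hs : s ∈ Set.Icc (0:ℝ) b := ⟨hsm.1.le, hsm.2⟩
  have := aux_dom_bound hb hs
  simpa [abs_abs] using this

/-- Integral bound on `[0, b]`. -/
lemma aux_int_bound {b : ℝ} (hb : 0 < b) :
    ∫ s in (0:ℝ)..b, |Real.log s| ≤ b * |Real.log b| + 4 * b := by
  have hg : IntervalIntegrable
      (fun s : ℝ => |Real.log b| + 2 * Real.sqrt b * s ^ (-(1/2) : ℝ)) volume 0 b :=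
    (intervalIntegrable_const).add
      ((intervalIntegral.intervalIntegrable_rpow' (by norm_num)).const_mul _)
  have hmono := intervalIntegral.integral_mono_on hb.le (aux_intble hb) hg
    (fun s hs => aux_dom_bound hb hs)
  have hval : ∫ s in (0:ℝ)..b, (|Real.log b| + 2 * Real.sqrt b * s ^ (-(1/2) : ℝ))
      = b * |Real.log b| + 2 * Real.sqrt b * (2 * Real.sqrt b) := by
    rw [intervalIntegral.integral_add intervalIntegrable_const
      ((intervalIntegral.intervalIntegrable_rpow' (by norm_num)).const_mul _),
      intervalIntegral.integral_const_mul, integral_rpow (Or.inl (by norm_num))]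
    have h0 : (0:ℝ) ^ (-(1/2) + 1 : ℝ) = 0 := by
      rw [Real.zero_rpow]; norm_num
    have hb2 : b ^ (-(1/2) + 1 : ℝ) = Real.sqrt b := by
      rw [Real.sqrt_eq_rpow]; norm_num
    rw [h0, hb2, intervalIntegral.integral_const]
    have : (-(1/2 : ℝ) + 1) = 1/2 := by norm_num
    rw [this]
    rw [smul_eq_mul, sub_zero, sub_zero]
    ring
  have hsq : Real.sqrt b * Real.sqrt b = b := Real.mul_self_sqrt hb.le
  calc ∫ s in (0:ℝ)..b, |Real.log s|
      ≤ ∫ s in (0:ℝ)..b, (|Real.log b| + 2 * Real.sqrt b * s ^ (-(1/2) : ℝ)) := hmono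
    _ = b * |Real.log b| + 2 * Real.sqrt b * (2 * Real.sqrt b) := hval
    _ = b * |Real.log b| + 4 * b := by nlinarith

/-- Integrability on symmetric interval. -/
lemma aux_intble_symm {b : ℝ} (hb : 0 < b) :
    IntervalIntegrable (fun s => |Real.log s|) volume (-b) b := by
  have h1 : IntervalIntegrable (fun s => |Real.log s|) volume (-b) 0 := by
    have := ((IntervalIntegrable.iff_comp_neg (by simp)).mp (aux_intble hb)).symm
    simpa [Real.log_neg_eq_log] using this
  exact h1.trans (aux_intble hb)

/-- Symmetric integral bound. -/
lemma aux_int_bound_symm {b : ℝ} (hb : 0 < b) :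
    ∫ s in (-b)..b, |Real.log s| ≤ 2 * (b * |Real.log b| + 4 * b) := by
  have h1 : IntervalIntegrable (fun s => |Real.log s|) volume (-b) 0 := by
    have := ((IntervalIntegrable.iff_comp_neg (by simp)).mp (aux_intble hb)).symm
    simpa [Real.log_neg_eq_log] using this
  have hsplit : ∫ s in (-b)..b, |Real.log s|
      = (∫ s in (-b)..(0:ℝ), |Real.log s|) + ∫ s in (0:ℝ)..b, |Real.log s| :=
    (intervalIntegral.integral_add_adjacent_intervals h1 (aux_intble hb)).symm
  have hneg : ∫ s in (-b)..(0:ℝ), |Real.log s| = ∫ s in (0:ℝ)..b, |Real.log s| := by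
    have := intervalIntegral.integral_comp_neg (a := 0) (b := b)
      (fun s => |Real.log s|)
    simp only [neg_zero] at this
    rw [← this]
    congr 1
    ext x
    rw [Real.log_neg_eq_log]
  rw [hsplit, hneg]
  have := aux_int_bound hb
  linarith

/-- Elementary one-dimensional estimate:
`λ · ∫_{−1/λ}^{1/λ} |log|r − t|| dt ≤ c + c·min(log λ, |log r|)` for `λ ≥ 1`, `0 < r ≤ M`. -/
theorem one_dim_log_integral_estimate (M : ℝ) (hM : 0 < M) :
    ∃ c > (0 : ℝ), ∀ l : ℝ, 1 ≤ l → ∀ r : ℝ, 0 < r → r ≤ M →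
      l * ∫ t in (-(1 / l))..(1 / l), abs (Real.log (abs (r - t)))
        ≤ c + c * min (Real.log l) |Real.log r| := by
  refine ⟨50 + 2 * max (Real.log M) 0, by positivity, ?_⟩
  intro l hl r hr hrM
  set c : ℝ := 50 + 2 * max (Real.log M) 0 with hc
  have hl0 : (0:ℝ) < l := lt_of_lt_of_le one_pos hl
  set a : ℝ := 1 / l with ha
  have ha0 : 0 < a := by positivity
  have ha1 : a ≤ 1 := by
    rw [ha, div_le_one hl0]; exact hl
  have hla : l * a = 1 := by
    rw [ha]; field_simp
  have hloga : Real.log a = -Real.log l := by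
    rw [ha, one_div, Real.log_inv]
  -- rewrite the integral
  have hsub : (∫ t in (-a)..a, |Real.log (|r - t|)|)
      = ∫ s in (r - a)..(r + a), |Real.log s| := by
    simp only [Real.log_abs]
    have := intervalIntegral.integral_comp_sub_left (a := -a) (b := a)
      (fun s => |Real.log s|) r
    simpa [sub_neg_eq_add] using this
  rw [hsub]
  have hminnn : 0 ≤ min (Real.log l) |Real.log r| :=
    le_min (Real.log_nonneg hl) (abs_nonneg _)
  have hc50 : (50:ℝ) ≤ c := by
    have : 0 ≤ max (Real.log M) 0 := le_max_right _ _
    rw [hc]; linarith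
  have hlog2 : Real.log 2 ≤ 1 := by
    have := Real.log_le_sub_one_of_pos (by norm_num : (0:ℝ) < 2); linarith
  have hlog3 : Real.log 3 ≤ 2 := by
    have := Real.log_le_sub_one_of_pos (by norm_num : (0:ℝ) < 3); linarith
  rcases le_or_gt (2 * a) r with hcaseA | hcaseB
  · -- Case A : 2a ≤ r, interval away from 0
    have hra : 0 < r - a := by linarith
    have hbound : ∀ s ∈ Set.Icc (r - a) (r + a),
        |Real.log s| ≤ |Real.log r| + Real.log 2 := by
      intro s ⟨hs1, hs2⟩
      have hs0 : 0 < s := lt_of_lt_of_le hra hs1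
      have hdiv : Real.log s - Real.log r = Real.log (s / r) := by
        rw [Real.log_div hs0.ne' hr.ne']
      have hsr1 : (1:ℝ)/2 ≤ s / r := by
        rw [div_le_div_iff₀ (by norm_num) hr]; linarith
      have hsr2 : s / r ≤ 3/2 := by
        rw [div_le_div_iff₀ hr (by norm_num)]; linarith
      have habs : |Real.log (s / r)| ≤ Real.log 2 := by
        rw [abs_le]
        constructor
        · have h1 : Real.log ((1:ℝ)/2) ≤ Real.log (s / r) :=
            Real.log_le_log (by norm_num) hsr1
          have h2 : Real.log ((1:ℝ)/2) = -Real.log 2 := by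
            rw [one_div, Real.log_inv]
          linarith
        · have h1 : Real.log (s / r) ≤ Real.log 2 :=
            Real.log_le_log (by positivity) (by linarith)
          exact h1
      calc |Real.log s| = |Real.log r + (Real.log s - Real.log r)| := by ring_nf
        _ ≤ |Real.log r| + |Real.log s - Real.log r| := abs_add_le _ _
        _ ≤ |Real.log r| + Real.log 2 := by rw [hdiv]; linarith
    have hcont : IntervalIntegrable (fun s => |Real.log s|) volume (r - a) (r + a) := by
      apply ContinuousOn.intervalIntegrable
      apply ContinuousOn.abs
      apply Real.continuousOn_log.mono
      intro x hx
      rw [Set.uIcc_of_le (by linarith)] at hx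
      exact fun h => by simp at h; exact absurd h (by rintro rfl; linarith [hx.1])
    have hIle : (∫ s in (r - a)..(r + a), |Real.log s|)
        ≤ 2 * a * (|Real.log r| + Real.log 2) := by
      have := intervalIntegral.integral_mono_on (by linarith : r - a ≤ r + a)
        hcont intervalIntegrable_const hbound
      rwa [intervalIntegral.integral_const, smul_eq_mul,
        show r + a - (r - a) = 2 * a by ring] at this
    have hmain : l * ∫ s in (r - a)..(r + a), |Real.log s|
        ≤ 2 * (|Real.log r| + Real.log 2) := by
      have := mul_le_mul_of_nonneg_left hIle hl0.le
      calc l * ∫ s in (r - a)..(r + a), |Real.log s|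
          ≤ l * (2 * a * (|Real.log r| + Real.log 2)) := this
        _ = 2 * (|Real.log r| + Real.log 2) := by
            have h2 : 0 ≤ |Real.log r| + Real.log 2 := by
              have := Real.log_nonneg (by norm_num : (1:ℝ) ≤ 2)
              positivity
            calc l * (2 * a * (|Real.log r| + Real.log 2))
                = (l * a) * (2 * (|Real.log r| + Real.log 2)) := by ring
              _ = 2 * (|Real.log r| + Real.log 2) := by rw [hla]; ring
    rcases le_or_gt |Real.log r| (Real.log l) with hA1 | hA2
    · -- min = |log r|
      rw [min_eq_right hA1]
      have habs0 : 0 ≤ |Real.log r| := abs_nonneg _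
      nlinarith
    · -- log l < |log r|; then r ≥ 1 and |log r| ≤ max(log M, 0)
      rw [min_eq_left hA2.le]
      have hr1 : 1 ≤ r := by
        by_contra hcon
        push_neg at hcon
        have hlogr_neg : Real.log r < 0 := Real.log_neg hr hcon
        have : |Real.log r| = -Real.log r := abs_of_neg hlogr_neg
        have h2a : Real.log (2 * a) ≤ Real.log r := Real.log_le_log (by positivity) hcaseA
        have h2a' : Real.log (2 * a) = Real.log 2 - Real.log l := by
          rw [Real.log_mul (by norm_num) ha0.ne', hloga]; ring
        have hlog2pos : 0 < Real.log 2 := Real.log_pos (by norm_num)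
        rw [this] at hA2
        linarith
      have hlogr : |Real.log r| ≤ max (Real.log M) 0 := by
        rw [abs_of_nonneg (Real.log_nonneg hr1)]
        exact le_max_of_le_left (Real.log_le_log hr hrM)
      have hll : 0 ≤ Real.log l := Real.log_nonneg hl
      nlinarith
  · -- Case B : r < 2a
    have h3a : 0 < 3 * a := by linarith
    have hIle : (∫ s in (r - a)..(r + a), |Real.log s|)
        ≤ ∫ s in (-(3*a))..(3*a), |Real.log s| := by
      apply intervalIntegral.integral_mono_interval (by linarith) (by linarith) (by linarith)
      · exact ae_of_all _ (fun x => abs_nonneg _)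
      · exact aux_intble_symm h3a
    have hIle2 : (∫ s in (-(3*a))..(3*a), |Real.log s|)
        ≤ 2 * (3 * a * |Real.log (3*a)| + 4 * (3*a)) := aux_int_bound_symm h3a
    have hlog3a : |Real.log (3*a)| ≤ 2 + Real.log l := by
      rw [Real.log_mul (by norm_num) ha0.ne', hloga]
      have hll : 0 ≤ Real.log l := Real.log_nonneg hl
      have h3pos : 0 ≤ Real.log 3 := Real.log_nonneg (by norm_num)
      rw [abs_le]
      constructor <;> [skip; skip] <;> nlinarith [abs_nonneg (Real.log 3 + -Real.log l)]
    have hmain : l * ∫ s in (r - a)..(r + a), |Real.log s|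
        ≤ 36 + 6 * Real.log l := by
      have hstep : l * ∫ s in (r - a)..(r + a), |Real.log s|
          ≤ l * (2 * (3 * a * |Real.log (3*a)| + 4 * (3*a))) :=
        mul_le_mul_of_nonneg_left (le_trans hIle hIle2) hl0.le
      have heq : l * (2 * (3 * a * |Real.log (3*a)| + 4 * (3*a)))
          = 6 * |Real.log (3*a)| + 24 := by
        have : l * (2 * (3 * a * |Real.log (3*a)| + 4 * (3*a)))
            = (l * a) * (6 * |Real.log (3*a)| + 24) := by ring
        rw [this, hla]; ring
      rw [heq] at hstep
      linarith
    -- log l ≤ min + 1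
    have hkey : Real.log l ≤ min (Real.log l) |Real.log r| + 1 := by
      rcases le_or_gt r 1 with hr1 | hr1
      · -- log l ≤ |log r| + log 2
        have hlogr : Real.log r ≤ 0 := Real.log_nonpos hr.le hr1
        have habs : |Real.log r| = -Real.log r := abs_of_nonpos hlogr
        have hlt : l < 2 / r := by
          rw [lt_div_iff₀ hr]
          have : r * l < 2 * a * l := by
            apply mul_lt_mul_of_pos_right hcaseB hl0
          calc l * r = r * l := by ring
            _ < 2 * a * l := this
            _ = 2 * (l * a) := by ring
            _ = 2 := by rw [hla]; ring
        have hll : Real.log l ≤ Real.log (2 / r) := Real.log_le_log hl0 hlt.le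
        have : Real.log (2 / r) = Real.log 2 - Real.log r := by
          rw [Real.log_div (by norm_num) hr.ne']
        have h1 : Real.log l ≤ |Real.log r| + 1 := by
          rw [habs]; linarith
        rcases min_cases (Real.log l) |Real.log r| with ⟨hm, _⟩ | ⟨hm, _⟩ <;> rw [hm] <;> linarith
      · -- r > 1 so l < 2, log l ≤ 1
        have hlt : l < 2 := by
          have : r * l < 2 * a * l := mul_lt_mul_of_pos_right hcaseB hl0
          have h2 : 2 * a * l = 2 := by rw [show 2*a*l = 2*(l*a) by ring, hla]; ring
          nlinarith
        have : Real.log l ≤ Real.log 2 := Real.log_le_log hl0 hlt.le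
        have hm := min_le_left (Real.log l) |Real.log r|
        linarith [hminnn]
    nlinarith
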